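/- Let n ≥ 3 be an integer, m = n − 1, ρ < 1/(2m), and let (x, y) be a solution of the system (S_ρ) on ℝ such that for all t ∈ ℝ: 0 < x(t) < 1, x′(t) < 0, y(t) > 0, y′(t) > 0, and (x(t), y(t)) → (1, 0) as t → −∞. Then x(t) → 0 and y(t) → +∞ as t → +∞. -/

import Mathlib

/-- `IsEinsteinSystemSol m ρ x y` means the pair of differentiable functions `(x, y)` solves
the planar system `(S_ρ)`:
`(1 − 2mρ)·x′ = (m−1)(1−mρ)(1 − x²) − x·y` and
`(1 − 2mρ)·y′ = −m(m−1)(1−(m+1)ρ)(1 − x²) + (1 + m − 4mρ)·x·y`,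
arising from rotationally symmetric gradient steady ρ-Einstein solitons. -/
def IsEinsteinSystemSol (m ρ : ℝ) (x y : ℝ → ℝ) : Prop :=
  Differentiable ℝ x ∧ Differentiable ℝ y ∧
    (∀ t : ℝ, (1 - 2 * m * ρ) * deriv x t =
      (m - 1) * (1 - m * ρ) * (1 - x t ^ 2) - x t * y t) ∧
    (∀ t : ℝ, (1 - 2 * m * ρ) * deriv y t =
      -(m * (m - 1) * (1 - (m + 1) * ρ) * (1 - x t ^ 2)) + (1 + m - 4 * m * ρ) * x t * y t)

open Filter Set in
/-- If a differentiable function converges at `+∞` and its derivative also converges,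
then the derivative's limit must be `0`. -/
lemma deriv_limit_zero_of_tendsto {f : ℝ → ℝ} (hf : Differentiable ℝ f) {a c : ℝ}
    (h1 : Tendsto f atTop (nhds a)) (h2 : Tendsto (deriv f) atTop (nhds c)) : c = 0 := by
  have key : ∀ t : ℝ, ∃ ξ, t < ξ ∧ ξ < t + 1 ∧ deriv f ξ = f (t + 1) - f t := by
    intro t
    obtain ⟨ξ, hξ, hd⟩ := exists_hasDerivAt_eq_slope f (deriv f) (by linarith : t < t + 1)
      hf.continuous.continuousOn (fun s _ => (hf s).hasDerivAt)
    refine ⟨ξ, hξ.1, hξ.2, ?_⟩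
    rw [hd]; ring_nf
  choose ξ hξ1 hξ2 hξ3 using key
  have hξtop : Tendsto ξ atTop atTop :=
    tendsto_atTop_mono (fun t => (hξ1 t).le) tendsto_id
  have A : Tendsto (fun t => deriv f (ξ t)) atTop (nhds c) := h2.comp hξtop
  have B : Tendsto (fun t => f (t + 1) - f t) atTop (nhds (a - a)) :=
    (h1.comp (tendsto_atTop_add_const_right _ 1 tendsto_id)).sub h1
  rw [sub_self] at B
  have B' : Tendsto (fun t => deriv f (ξ t)) atTop (nhds 0) := by
    refine B.congr fun t => (hξ3 t).symm
  exact tendsto_nhds_unique A B'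

open Filter Set in
/-- First step of Proposition 4.4: along the soliton trajectory (`ρ < 1/(2m)`),
`x(t) → 0` and `y(t) → +∞` as `t → +∞`. -/
theorem soliton_trajectory_limits (n : ℕ) (hn : 3 ≤ n) (m ρ : ℝ)
    (hm : m = (n : ℝ) - 1) (hρ : ρ < 1 / (2 * m)) (x y : ℝ → ℝ)
    (hsol : IsEinsteinSystemSol m ρ x y)
    (hx : ∀ t : ℝ, 0 < x t ∧ x t < 1) (hx' : ∀ t : ℝ, deriv x t < 0)
    (hy : ∀ t : ℝ, 0 < y t) (hy' : ∀ t : ℝ, 0 < deriv y t)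
    (hlim : Filter.Tendsto (fun t => (x t, y t)) Filter.atBot (nhds (1, 0))) :
    Filter.Tendsto x Filter.atTop (nhds 0) ∧
      Filter.Tendsto y Filter.atTop Filter.atTop := by
  obtain ⟨hdx, hdy, hex, hey⟩ := hsol
  have hn3 : (3 : ℝ) ≤ (n : ℝ) := by exact_mod_cast hn
  have hm2 : (2 : ℝ) ≤ m := by rw [hm]; linarith
  have hmpos : (0 : ℝ) < m := by linarith
  have hden : 0 < 1 - 2 * m * ρ := by
    have h := (lt_div_iff₀ (by positivity : (0:ℝ) < 2 * m)).mp hρ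
    nlinarith
  have hdenne : (1 - 2 * m * ρ) ≠ 0 := ne_of_gt hden
  have hmρ : 0 < 1 - m * ρ := by nlinarith
  -- x is antitone, bounded below by 0
  have hanti : Antitone x := (strictAnti_of_deriv_neg hx').antitone
  have hmono : Monotone y := (strictMono_of_deriv_pos hy').monotone
  have hbb : BddBelow (range x) := ⟨0, by rintro _ ⟨t, rfl⟩; exact (hx t).1.le⟩
  set L : ℝ := ⨅ t, x t with hLdef
  have hxL : Tendsto x atTop (nhds L) := tendsto_atTop_ciInf hanti hbb
  have hL0 : 0 ≤ L := le_ciInf fun t => (hx t).1.le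
  have hLle : ∀ t, L ≤ x t := fun t => ciInf_le hbb t
  have hL1 : L < 1 := lt_of_le_of_lt (hLle 0) (hx 0).2
  -- explicit formulas for the derivatives
  have hdxeq : ∀ t, deriv x t =
      ((m - 1) * (1 - m * ρ) * (1 - x t ^ 2) - x t * y t) / (1 - 2 * m * ρ) := by
    intro t; rw [eq_div_iff hdenne, mul_comm]; exact hex t
  have hdyeq : ∀ t, deriv y t =
      (-(m * (m - 1) * (1 - (m + 1) * ρ) * (1 - x t ^ 2)) + (1 + m - 4 * m * ρ) * x t * y t)
        / (1 - 2 * m * ρ) := by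
    intro t; rw [eq_div_iff hdenne, mul_comm]; exact hey t
  -- y tends to +∞
  have hytop : Tendsto y atTop atTop := by
    by_contra hcon
    have hba : BddAbove (range y) := by
      by_contra h; exact hcon (tendsto_atTop_atTop_of_monotone' hmono h)
    set M : ℝ := ⨆ t, y t with hMdef
    have hyM : Tendsto y atTop (nhds M) := tendsto_atTop_ciSup hmono hba
    -- limits of the derivatives
    have hcx : Tendsto (deriv x) atTop
        (nhds (((m - 1) * (1 - m * ρ) * (1 - L ^ 2) - L * M) / (1 - 2 * m * ρ))) := by
      have : Tendsto (fun t => ((m - 1) * (1 - m * ρ) * (1 - x t ^ 2) - x t * y t)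
          / (1 - 2 * m * ρ)) atTop
          (nhds (((m - 1) * (1 - m * ρ) * (1 - L ^ 2) - L * M) / (1 - 2 * m * ρ))) := by
        exact Tendsto.div_const ((tendsto_const_nhds.mul
          (tendsto_const_nhds.sub (hxL.pow 2))).sub (hxL.mul hyM)) _
      exact this.congr fun t => (hdxeq t).symm
    have hcy : Tendsto (deriv y) atTop
        (nhds ((-(m * (m - 1) * (1 - (m + 1) * ρ) * (1 - L ^ 2))
          + (1 + m - 4 * m * ρ) * L * M) / (1 - 2 * m * ρ))) := by
      have : Tendsto (fun t => (-(m * (m - 1) * (1 - (m + 1) * ρ) * (1 - x t ^ 2))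
          + (1 + m - 4 * m * ρ) * x t * y t) / (1 - 2 * m * ρ)) atTop
          (nhds ((-(m * (m - 1) * (1 - (m + 1) * ρ) * (1 - L ^ 2))
            + (1 + m - 4 * m * ρ) * L * M) / (1 - 2 * m * ρ))) := by
        exact Tendsto.div_const ((tendsto_const_nhds.mul
          (tendsto_const_nhds.sub (hxL.pow 2))).neg.add
          ((tendsto_const_nhds.mul hxL).mul hyM)) _
      exact this.congr fun t => (hdyeq t).symm
    have hAz := deriv_limit_zero_of_tendsto hdx hxL hcx
    have hBz := deriv_limit_zero_of_tendsto hdy hyM hcy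
    rw [div_eq_zero_iff] at hAz hBz
    have eqA : (m - 1) * (1 - m * ρ) * (1 - L ^ 2) - L * M = 0 := hAz.resolve_right hdenne
    have eqB : -(m * (m - 1) * (1 - (m + 1) * ρ) * (1 - L ^ 2))
        + (1 + m - 4 * m * ρ) * L * M = 0 := hBz.resolve_right hdenne
    have key : (1 - L ^ 2) * ((m - 1) * (1 - 2 * m * ρ) ^ 2) = 0 := by
      linear_combination eqB + (1 + m - 4 * m * ρ) * eqA
    have hfac : (0 : ℝ) < (m - 1) * (1 - 2 * m * ρ) ^ 2 := mul_pos (by linarith) (by positivity)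
    have hL2 : 1 - L ^ 2 = 0 := by
      rcases mul_eq_zero.mp key with h | h
      · exact h
      · exact absurd h (ne_of_gt hfac)
    nlinarith
  refine ⟨?_, hytop⟩
  -- now show L = 0
  have hLz : L = 0 := by
    by_contra hLne
    have hLpos : 0 < L := lt_of_le_of_ne hL0 (Ne.symm hLne)
    set C : ℝ := (m - 1) * (1 - m * ρ) with hC
    have hCpos : 0 < C := mul_pos (by linarith) hmρ
    obtain ⟨T, hT⟩ := (hytop.eventually_ge_atTop ((C + (1 - 2 * m * ρ)) / L)).exists_forall_of_atTop
    -- for t ≥ T, deriv x t ≤ -1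
    have hderiv : ∀ t, T ≤ t → deriv x t ≤ -1 := by
      intro t ht
      rw [hdxeq t]
      rw [div_le_iff₀ hden]
      have hxy : C + (1 - 2 * m * ρ) ≤ x t * y t := by
        have h1 : (C + (1 - 2 * m * ρ)) / L * L ≤ y t * L := by
          have := hT t ht
          have hyt := (hy t).le
          nlinarith
        rw [div_mul_cancel₀ _ (ne_of_gt hLpos)] at h1
        calc C + (1 - 2 * m * ρ) ≤ y t * L := h1
          _ ≤ x t * y t := by nlinarith [(hy t).le, hLle t]
      have hsq : 0 ≤ x t ^ 2 := sq_nonneg _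
      nlinarith [(hx t).2, (hx t).1]
    -- g = x + id is antitone on [T, ∞)
    have hg : AntitoneOn (fun s => x s + s) (Ici T) := by
      apply antitoneOn_of_deriv_nonpos (convex_Ici T)
        ((hdx.continuous.add continuous_id).continuousOn)
        ((hdx.add differentiable_id).differentiableOn)
      intro s hs
      rw [interior_Ici] at hs
      show deriv (fun s => x s + s) s ≤ 0
      have hd : deriv (fun s => x s + s) s = deriv x s + 1 := by
        rw [deriv_fun_add (g := fun s : ℝ => s) (hdx s) differentiableAt_id]
        simp
      rw [hd]
      linarith [hderiv s (le_of_lt hs)]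
    have habs : x (T + x T + 1) + (T + x T + 1) ≤ x T + T :=
      hg self_mem_Ici (by nlinarith [(hx T).1] : T ≤ T + x T + 1)
        (by nlinarith [(hx T).1])
    nlinarith [(hx (T + x T + 1)).1]
  rw [hLz] at hxL
  exact hxL
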